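/- Let G be the group ⟨a, b | a^k = b^{ql} = 1, b a b^{-1} = a^n⟩ with q prime, n^q ≡ 1 (mod k), n ≢ 1 (mod k), and c = gcd(n-1, k). If q ∤ j, then the centralizer of a^i b^j in G is the subgroup generated by a^i b^j, a^{k/c}, and b^q; it is abelian and has order c·l·q. -/

import Mathlib

private lemma gcd_pow_sub_one' {k q : ℕ} {n : ℤ} (hq : q.Prime)
    (hnq : (k:ℤ) ∣ n ^ q - 1) {j : ℕ} (hj : ¬ q ∣ j) :
    Int.gcd (n ^ j - 1) (k:ℤ) = Int.gcd (n - 1) (k:ℤ) := by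
  have h1 : ((Int.gcd (n-1) (k:ℤ) : ℕ) : ℤ) ∣ (Int.gcd (n^j - 1) (k:ℤ) : ℕ) := by
    apply Int.dvd_coe_gcd
    · exact dvd_trans (Int.gcd_dvd_left _ _) (by simpa using sub_dvd_pow_sub_pow n 1 j)
    · exact Int.gcd_dvd_right _ _
  have h2 : ((Int.gcd (n^j-1) (k:ℤ) : ℕ) : ℤ) ∣ (Int.gcd (n-1) (k:ℤ) : ℕ) := by
    set d := Int.gcd (n^j-1) (k:ℤ) with hd
    have hdk : (d:ℤ) ∣ (k:ℤ) := Int.gcd_dvd_right _ _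
    apply Int.dvd_coe_gcd _ hdk
    have hj1 : ((n : ZMod d))^j = 1 := by
      have : ((n^j - 1 : ℤ) : ZMod d) = 0 := by
        rw [ZMod.intCast_zmod_eq_zero_iff_dvd]
        exact Int.gcd_dvd_left _ _
      push_cast at this
      linear_combination this
    have hq1 : ((n : ZMod d))^q = 1 := by
      have : ((n^q - 1 : ℤ) : ZMod d) = 0 := by
        rw [ZMod.intCast_zmod_eq_zero_iff_dvd]
        exact dvd_trans hdk hnq
      push_cast at this
      linear_combination this
    have ho : orderOf ((n : ZMod d)) ∣ Nat.gcd j q :=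
      Nat.dvd_gcd (orderOf_dvd_of_pow_eq_one hj1) (orderOf_dvd_of_pow_eq_one hq1)
    have hcop : Nat.gcd j q = 1 := Nat.Coprime.gcd_eq_one
      (Nat.Coprime.symm ((Nat.Prime.coprime_iff_not_dvd hq).mpr hj))
    rw [hcop, Nat.dvd_one] at ho
    have : (n : ZMod d) = 1 := orderOf_eq_one_iff.mp ho
    rw [← ZMod.intCast_zmod_eq_zero_iff_dvd]
    push_cast
    linear_combination this
  exact Nat.dvd_antisymm (Int.natCast_dvd_natCast.mp h2) (Int.natCast_dvd_natCast.mp h1)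

private lemma dvd_gcd_cancel' {k : ℕ} (hk : 0 < k) (M z : ℤ) :
    (k:ℤ) ∣ M * z ↔ ((k / Int.gcd M (k:ℤ) : ℕ) : ℤ) ∣ z := by
  set c := Int.gcd M (k:ℤ) with hc
  have hc0 : 0 < c := Int.gcd_pos_iff.mpr (Or.inr (by exact_mod_cast hk.ne'))
  have hcM : (c:ℤ) ∣ M := Int.gcd_dvd_left _ _
  have hck : (c:ℤ) ∣ (k:ℤ) := Int.gcd_dvd_right _ _
  have hcast : ((k / c : ℕ) : ℤ) = (k:ℤ) / (c:ℤ) := rfl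
  obtain ⟨M', hM'⟩ := hcM
  obtain ⟨k', hk'⟩ := hck
  have hM'e : M / (c:ℤ) = M' := by
    rw [hM']; exact Int.mul_ediv_cancel_left _ (by exact_mod_cast hc0.ne')
  have hk'e : (k:ℤ) / (c:ℤ) = k' := by
    rw [hk']; exact Int.mul_ediv_cancel_left _ (by exact_mod_cast hc0.ne')
  have hcop : Int.gcd M' k' = 1 := by
    rw [← hM'e, ← hk'e]; exact Int.gcd_div_gcd_div_gcd hc0
  rw [hcast, hk'e]
  constructor
  · intro h
    have h2 : k' ∣ M' * z := by
      rcases h with ⟨w, hw⟩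
      refine ⟨w, ?_⟩
      have : (c:ℤ) * (M' * z) = (c:ℤ) * (k' * w) := by
        rw [← mul_assoc, ← hM', ← mul_assoc, ← hk']; linarith [hw]
      exact mul_left_cancel₀ (by exact_mod_cast hc0.ne' : (c:ℤ) ≠ 0) this
    exact (Int.isCoprime_iff_gcd_eq_one.mpr hcop).symm.dvd_of_dvd_mul_left h2
  · rintro ⟨w, rfl⟩
    exact ⟨M' * w, by rw [hM', hk']; ring⟩

theorem stmt_16 {G : Type*} [Group G] [Fintype G] (k q l : ℕ) (n : ℤ) (a b : G)
    (hk : 0 < k) (hl : 0 < l) (hq : q.Prime)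
    (hnq : n ^ q ≡ 1 [ZMOD (k : ℤ)]) (hn1 : ¬ n ≡ 1 [ZMOD (k : ℤ)])
    (hoa : orderOf a = k) (hob : orderOf b = q * l)
    (hrel : b * a * b⁻¹ = a ^ n)
    (hgen : Subgroup.closure ({a, b} : Set G) = ⊤)
    (hcard : Fintype.card G = k * q * l)
    (i : ℤ) (j : ℕ) (hj : ¬ q ∣ j) :
    Subgroup.centralizer ({a ^ i * b ^ j} : Set G)
        = Subgroup.closure
            ({a ^ i * b ^ j, a ^ (k / Int.gcd (n - 1) (k : ℤ)), b ^ q} : Set G) ∧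
    (∀ x ∈ Subgroup.centralizer ({a ^ i * b ^ j} : Set G),
      ∀ y ∈ Subgroup.centralizer ({a ^ i * b ^ j} : Set G), x * y = y * x) ∧
    Nat.card (Subgroup.centralizer ({a ^ i * b ^ j} : Set G))
        = Int.gcd (n - 1) (k : ℤ) * l * q := by
  set c := Int.gcd (n - 1) (k:ℤ) with hcdef
  set x := a ^ i * b ^ j with hxdef
  set C := Subgroup.centralizer ({x} : Set G) with hCdef
  -- basic divisibility facts
  have hknq : (k:ℤ) ∣ n ^ q - 1 := by
    simpa using hnq.dvd.neg_right
  have hgcdj : Int.gcd (n ^ j - 1) (k:ℤ) = c := gcd_pow_sub_one' hq hknq hj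
  have hc0 : 0 < c := Int.gcd_pos_iff.mpr (Or.inr (by exact_mod_cast hk.ne'))
  have hckZ : (c:ℤ) ∣ (k:ℤ) := Int.gcd_dvd_right _ _
  have hck : c ∣ k := Int.natCast_dvd_natCast.mp hckZ
  have hcn1 : (c:ℤ) ∣ n - 1 := Int.gcd_dvd_left _ _
  have hcnt : ∀ t : ℕ, (c:ℤ) ∣ n ^ t - 1 := fun t =>
    dvd_trans hcn1 (by simpa using sub_dvd_pow_sub_pow n 1 t)
  -- the cancellation property
  have hcancel : ∀ z : ℤ, (k:ℤ) ∣ (n ^ j - 1) * z ↔ ((k / c : ℕ) : ℤ) ∣ z := by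
    intro z
    have := dvd_gcd_cancel' hk (n ^ j - 1) z
    rwa [hgcdj] at this
  -- conjugation formulas
  have hconj1 : ∀ s : ℤ, b * a ^ s * b⁻¹ = a ^ (n * s) := by
    intro s
    rw [zpow_mul, ← hrel, conj_zpow]
  have hconj : ∀ (t : ℕ) (s : ℤ), b ^ t * a ^ s * (b ^ t)⁻¹ = a ^ (n ^ t * s) := by
    intro t
    induction t with
    | zero => intro s; simp
    | succ t ih =>
        intro s
        have : b ^ (t+1) * a ^ s * (b ^ (t+1))⁻¹
            = b ^ t * (b * a ^ s * b⁻¹) * (b ^ t)⁻¹ := by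
          rw [pow_succ]; group
        rw [this, hconj1 s, ih (n * s), ← mul_assoc, pow_succ]
  have hswap : ∀ (t : ℕ) (s : ℤ), b ^ t * a ^ s = a ^ (n ^ t * s) * b ^ t := by
    intro t s
    rw [← hconj t s]; group
  -- multiplication of normal forms
  have hmulform : ∀ (s : ℤ) (t : ℕ) (s' : ℤ) (t' : ℕ),
      (a ^ s * b ^ t) * (a ^ s' * b ^ t') = a ^ (s + n ^ t * s') * b ^ (t + t') := by
    intro s t s' t'
    calc (a ^ s * b ^ t) * (a ^ s' * b ^ t') = a ^ s * (b ^ t * a ^ s') * b ^ t' := by group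
      _ = a ^ s * (a ^ (n ^ t * s') * b ^ t) * b ^ t' := by rw [hswap]
      _ = (a ^ s * a ^ (n ^ t * s')) * (b ^ t * b ^ t') := by group
      _ = a ^ (s + n ^ t * s') * b ^ (t + t') := by rw [← zpow_add, ← pow_add]
  -- commutation criterion
  have hcommiff : ∀ (s : ℤ) (t : ℕ) (s' : ℤ) (t' : ℕ),
      ((a ^ s * b ^ t) * (a ^ s' * b ^ t') = (a ^ s' * b ^ t') * (a ^ s * b ^ t))
        ↔ (k:ℤ) ∣ (n ^ t - 1) * s' - (n ^ t' - 1) * s := by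
    intro s t s' t'
    rw [hmulform, hmulform, add_comm t' t, mul_left_inj, ← mul_inv_eq_one, ← zpow_sub,
      ← orderOf_dvd_iff_zpow_eq_one, hoa]
    have : (s + n ^ t * s') - (s' + n ^ t' * s) = (n ^ t - 1) * s' - (n ^ t' - 1) * s := by ring
    rw [this]
  -- membership criterion
  have hcrit : ∀ (s : ℤ) (t : ℕ),
      a ^ s * b ^ t ∈ C ↔ (k:ℤ) ∣ (n ^ t - 1) * i - (n ^ j - 1) * s := by
    intro s t
    rw [hCdef, Subgroup.mem_centralizer_singleton_iff, hxdef, hcommiff]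
  -- order of b
  have hql0 : 0 < q * l := Nat.mul_pos hq.pos hl
  have hbql : b ^ (q * l) = 1 := by rw [← hob]; exact pow_orderOf_eq_one b
  have hbinv : ∀ t : ℕ, (b ^ t)⁻¹ = b ^ (t * (q * l - 1)) := by
    intro t
    symm
    apply eq_inv_of_mul_eq_one_left
    rw [← pow_add]
    have : t * (q * l - 1) + t = t * (q * l) := by
      rw [Nat.mul_sub, mul_one, Nat.sub_add_cancel (Nat.le_mul_of_pos_right t hql0)]
    rw [this, mul_comm, pow_mul, hbql, one_pow]
  -- normal form
  have hform : ∀ g : G, ∃ s : ℤ, ∃ t : ℕ, g = a ^ s * b ^ t := by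
    intro g
    have hg : g ∈ Subgroup.closure ({a, b} : Set G) := hgen ▸ Subgroup.mem_top g
    refine Subgroup.closure_induction ?_ ?_ ?_ ?_ hg
    · rintro y (rfl | rfl)
      · exact ⟨1, 0, by simp⟩
      · exact ⟨0, 1, by simp⟩
    · exact ⟨0, 0, by simp⟩
    · rintro y z hy hz ⟨s, t, rfl⟩ ⟨s', t', rfl⟩
      exact ⟨s + n ^ t * s', t + t', hmulform s t s' t'⟩
    · rintro y hy ⟨s, t, rfl⟩
      refine ⟨n ^ (t * (q * l - 1)) * (-s), t * (q * l - 1), ?_⟩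
      rw [mul_inv_rev, ← zpow_neg, hbinv t, hswap]
  -- generators lie in the centralizer
  set kc := k / c with hkcdef
  have hxC : x ∈ C := Subgroup.mem_centralizer_singleton_iff.mpr rfl
  have hbqC : b ^ q ∈ C := by
    have h := (hcrit 0 q).mpr (by
      have : (n ^ q - 1) * i - (n ^ j - 1) * 0 = (n ^ q - 1) * i := by ring
      rw [this]; exact hknq.mul_right i)
    rwa [zpow_zero, one_mul] at h
  have hkkc : (k:ℤ) ∣ (n ^ j - 1) * (kc:ℤ) := (hcancel kc).mpr dvd_rfl
  have haC : a ^ kc ∈ C := by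
    have h := (hcrit (kc:ℤ) 0).mpr (by
      have : (n ^ 0 - 1) * i - (n ^ j - 1) * (kc:ℤ) = -((n ^ j - 1) * (kc:ℤ)) := by ring
      rw [this]; exact hkkc.neg_right)
    rwa [pow_zero, mul_one, zpow_natCast] at h
  -- powers of x
  have hxpow : ∀ u : ℕ, ∃ e : ℤ, x ^ u = a ^ e * b ^ (u * j) := by
    intro u
    induction u with
    | zero => exact ⟨0, by simp⟩
    | succ u ih =>
        obtain ⟨e, he⟩ := ih
        refine ⟨e + n ^ (u * j) * i, ?_⟩
        rw [pow_succ, he, hxdef, hmulform, Nat.succ_mul]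
  -- the generating set
  set S : Set G := {x, a ^ kc, b ^ q} with hSdef
  have hxS : x ∈ Subgroup.closure S := Subgroup.subset_closure (by left; rfl)
  have haS : a ^ kc ∈ Subgroup.closure S := Subgroup.subset_closure (by right; left; rfl)
  have hbS : b ^ q ∈ Subgroup.closure S := Subgroup.subset_closure (by right; right; rfl)
  -- closure S ≤ C
  have hle1 : Subgroup.closure S ≤ C := by
    rw [Subgroup.closure_le]
    rintro y (rfl | rfl | rfl)
    · exact hxC
    · exact haC
    · exact hbqC
  -- C ≤ closure S
  have hle2 : C ≤ Subgroup.closure S := by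
    intro g hgC
    obtain ⟨s, t, rfl⟩ := hform g
    haveI : Fact q.Prime := ⟨hq⟩
    haveI : NeZero q := ⟨hq.pos.ne'⟩
    have hjz : ((j : ZMod q)) ≠ 0 := by
      rw [Ne, ZMod.natCast_eq_zero_iff]; exact hj
    set u : ℕ := ((-(t : ZMod q)) / (j : ZMod q)).val with hudef
    have hqd : q ∣ t + u * j := by
      rw [← ZMod.natCast_eq_zero_iff]
      push_cast
      rw [hudef, ZMod.natCast_zmod_val, div_mul_cancel₀ _ hjz]
      ring
    obtain ⟨w, hw⟩ := hqd
    obtain ⟨e, he⟩ := hxpow u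
    have hmem : a ^ (s + n ^ t * e) * b ^ (q * w) ∈ C := by
      rw [← hw, ← hmulform, ← he]
      exact mul_mem hgC (pow_mem hxC u)
    set s' : ℤ := s + n ^ t * e with hs'def
    have hbqw : b ^ (q * w) ∈ C := by rw [pow_mul]; exact pow_mem hbqC w
    have has' : a ^ s' ∈ C := by
      have : a ^ s' = (a ^ s' * b ^ (q * w)) * (b ^ (q * w))⁻¹ := by group
      rw [this]; exact mul_mem hmem (inv_mem hbqw)
    have hdvd : ((kc : ℕ) : ℤ) ∣ s' := by
      rw [← hcancel]
      have h0 := (hcrit s' 0).mp (by rwa [pow_zero, mul_one])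
      have : (n ^ 0 - 1) * i - (n ^ j - 1) * s' = -((n ^ j - 1) * s') := by ring
      rw [this, dvd_neg] at h0
      exact h0
    obtain ⟨w', hw'⟩ := hdvd
    have has'S : a ^ s' ∈ Subgroup.closure S := by
      rw [hw', zpow_mul, zpow_natCast]
      exact Subgroup.zpow_mem _ haS w'
    have hgform : a ^ s * b ^ t = (a ^ s' * b ^ (q * w)) * (x ^ u)⁻¹ := by
      rw [hs'def, ← hw, ← hmulform, ← he]; group
    rw [hgform, pow_mul]
    exact mul_mem (mul_mem has'S (Subgroup.pow_mem _ hbS w))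
      (inv_mem (Subgroup.pow_mem _ hxS u))
  have hCeq : C = Subgroup.closure S := le_antisymm hle2 hle1
  -- commuting generators
  have hcxa : Commute x (a ^ kc) := (Subgroup.mem_centralizer_singleton_iff.mp haC).symm
  have hcxb : Commute x (b ^ q) := (Subgroup.mem_centralizer_singleton_iff.mp hbqC).symm
  have hcab' : Commute (a ^ kc) (b ^ q) := by
    have h := (hcommiff (kc:ℤ) 0 0 q).mpr (by
      have : (n ^ 0 - 1) * 0 - (n ^ q - 1) * (kc:ℤ) = -((n ^ q - 1) * (kc:ℤ)) := by ring
      rw [this]; exact (hknq.mul_right (kc:ℤ)).neg_right)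
    rwa [pow_zero, zpow_zero, mul_one, one_mul, zpow_natCast] at h
  -- the centralizer is abelian
  have habel : ∀ x' ∈ C, ∀ y' ∈ C, x' * y' = y' * x' := by
    intro x' hx' y' hy'
    rw [hCeq] at hx' hy'
    refine Subgroup.closure_induction₂
      (p := fun u v _ _ => Commute u v) ?_ ?_ ?_ ?_ ?_ ?_ ?_ hx' hy'
    · rintro z w (rfl | rfl | rfl) (rfl | rfl | rfl)
      · exact Commute.refl _
      · exact hcxa
      · exact hcxb
      · exact hcxa.symm
      · exact Commute.refl _
      · exact hcab'
      · exact hcxb.symm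
      · exact hcab'.symm
      · exact Commute.refl _
    · exact fun z _ => Commute.one_left z
    · exact fun z _ => Commute.one_right z
    · exact fun _ _ _ _ _ _ h1 h2 => h1.mul_left h2
    · exact fun _ _ _ _ _ _ h1 h2 => h1.mul_right h2
    · exact fun _ _ _ _ h => h.inv_left
    · exact fun _ _ _ _ h => h.inv_right
  -- cardinality
  haveI hAn : (Subgroup.zpowers a).Normal := by
    constructor
    intro g hg h
    obtain ⟨z, rfl⟩ := Subgroup.mem_zpowers_iff.mp hg
    obtain ⟨s, t, rfl⟩ := hform h
    have h1 : (a ^ s * b ^ t) * a ^ z * (a ^ s * b ^ t)⁻¹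
        = a ^ s * (b ^ t * a ^ z * (b ^ t)⁻¹) * (a ^ s)⁻¹ := by group
    rw [h1, hconj, ← zpow_neg, ← zpow_add, ← zpow_add]
    exact Subgroup.zpow_mem_zpowers a _
  have hcardA : Nat.card (Subgroup.zpowers a) = k := by rw [Nat.card_zpowers, hoa]
  have hcardG : Nat.card G = k * q * l := by rw [Nat.card_eq_fintype_card, hcard]
  have hcardQ : Nat.card (G ⧸ Subgroup.zpowers a) = q * l := by
    have h := Subgroup.card_eq_card_quotient_mul_card_subgroup (Subgroup.zpowers a)
    rw [hcardA, hcardG] at h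
    apply Nat.eq_of_mul_eq_mul_right hk
    rw [← h]; ring
  set f : C →* G ⧸ Subgroup.zpowers a :=
    (QuotientGroup.mk' (Subgroup.zpowers a)).comp C.subtype with hfdef
  have hmk1 : ∀ z : ℤ, (QuotientGroup.mk' (Subgroup.zpowers a)) (a ^ z) = 1 :=
    fun z => (QuotientGroup.eq_one_iff _).mpr (Subgroup.zpow_mem_zpowers a z)
  have hfsurj : Function.Surjective f := by
    intro y
    obtain ⟨g, rfl⟩ := QuotientGroup.mk'_surjective (Subgroup.zpowers a) y
    obtain ⟨s, t, rfl⟩ := hform g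
    set α := Int.gcdA (n ^ j - 1) (k:ℤ) with hα
    set β := Int.gcdB (n ^ j - 1) (k:ℤ) with hβ
    have hbez : (c:ℤ) = (n ^ j - 1) * α + (k:ℤ) * β := by
      rw [← hgcdj]; exact Int.gcd_eq_gcd_ab _ _
    obtain ⟨m, hm⟩ : (c:ℤ) ∣ (n ^ t - 1) * i := (hcnt t).mul_right i
    have hsol : (k:ℤ) ∣ (n ^ t - 1) * i - (n ^ j - 1) * (α * m) :=
      ⟨β * m, by rw [hm, hbez]; ring⟩
    refine ⟨⟨a ^ (α * m) * b ^ t, (hcrit _ t).mpr hsol⟩, ?_⟩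
    show (QuotientGroup.mk' _) (a ^ (α * m) * b ^ t) = (QuotientGroup.mk' _) (a ^ s * b ^ t)
    rw [map_mul, map_mul, hmk1, hmk1]
  have hcardquot : Nat.card (C ⧸ f.ker) = q * l := by
    rw [Nat.card_congr (QuotientGroup.quotientKerEquivOfSurjective f hfsurj).toEquiv, hcardQ]
  have hkerle : Subgroup.zpowers (a ^ kc) ≤ C := Subgroup.zpowers_le.mpr haC
  have hker : f.ker = (Subgroup.zpowers (a ^ kc)).subgroupOf C := by
    have h1 : f.ker = (Subgroup.zpowers a).subgroupOf C := by
      rw [hfdef, ← MonoidHom.comap_ker, QuotientGroup.ker_mk']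
      rfl
    rw [h1]
    ext ⟨g, hgC⟩
    simp only [Subgroup.mem_subgroupOf]
    constructor
    · intro hg
      obtain ⟨z, rfl⟩ := Subgroup.mem_zpowers_iff.mp hg
      have h0 := (hcrit z 0).mp (by rwa [pow_zero, mul_one])
      have he : (n ^ 0 - 1) * i - (n ^ j - 1) * z = -((n ^ j - 1) * z) := by ring
      rw [he, dvd_neg, hcancel] at h0
      obtain ⟨w', hw'⟩ := h0
      exact Subgroup.mem_zpowers_iff.mpr ⟨w', by rw [← zpow_natCast, ← zpow_mul, ← hw']⟩
    · intro hg
      obtain ⟨z, rfl⟩ := Subgroup.mem_zpowers_iff.mp hg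
      rw [← zpow_natCast, ← zpow_mul]
      exact Subgroup.zpow_mem_zpowers a _
  have hcardker : Nat.card f.ker = c := by
    rw [hker, Nat.card_congr (Subgroup.subgroupOfEquivOfLe hkerle).toEquiv,
      Nat.card_zpowers, orderOf_pow, hoa]
    rw [Nat.gcd_eq_right (Nat.div_dvd_of_dvd hck)]
    exact Nat.div_div_self hck hk.ne'
  have hcardC : Nat.card C = c * l * q := by
    have h := Subgroup.card_eq_card_quotient_mul_card_subgroup f.ker
    rw [hcardquot, hcardker] at h
    rw [h]; ring
  exact ⟨hCeq, habel, hcardC⟩
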